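/- Let n ≥ 2 and let μ₁, μ₂ be probability measures on (Fin n → ℕ), each exchangeable (invariant under the maps c ↦ c ∘ σ for all permutations σ of Fin n), and let μ = μ₁.prod μ₂. Define the Rand index R(c₁, c₂) = (n choose 2)⁻¹ · Σ_{i < j} [𝟙(c₁ i = c₁ j ∧ c₂ i = c₂ j) + 𝟙(c₁ i ≠ c₁ j ∧ c₂ i ≠ c₂ j)]. Then the expected Rand index under independence equals ER^⊥ = μ₁{c | c 0 = c 1} · μ₂{c | c 0 = c 1} + μ₁{c | c 0 ≠ c 1} · μ₂{c | c 0 ≠ c 1}; that is, ∫ R dμ = Σ_{κ=1}^{2} ℙ(K₁₂ = κ) ℙ(K₂₂ = κ), where K_{ℓ2} ∈ {1,2} is the number of clusters at layer ℓ among subjects 0 and 1. -/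

import Mathlib

open MeasureTheory

private lemma card_pairs (n : ℕ) :
    ((Finset.univ.filter (fun q : Fin n × Fin n => q.1 < q.2)).card) = n.choose 2 := by
  rw [Finset.card_filter, ← Finset.univ_product_univ, Finset.sum_product, Finset.sum_comm]
  have h : ∀ j : Fin n, (∑ i : Fin n, if i < j then 1 else 0) = (j : ℕ) := by
    intro j
    rw [← Finset.card_filter]
    have : Finset.univ.filter (fun i : Fin n => i < j) = Finset.Iio j := by
      ext i; simp
    rw [this, Fin.card_Iio]
  simp only [h]
  rw [Fin.sum_univ_eq_sum_range (fun k => k), Finset.sum_range_id, Nat.choose_two_right]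

private lemma meas_eq_set (n : ℕ) (i j : Fin n) :
    MeasurableSet {c : Fin n → ℕ | c i = c j} :=
  measurableSet_eq_fun (measurable_pi_apply i) (measurable_pi_apply j)

private lemma meas_ne_set (n : ℕ) (i j : Fin n) :
    MeasurableSet {c : Fin n → ℕ | c i ≠ c j} := by
  have : {c : Fin n → ℕ | c i ≠ c j} = {c : Fin n → ℕ | c i = c j}ᶜ := rfl
  rw [this]; exact (meas_eq_set n i j).compl

private lemma exch_measure {n : ℕ} (μ : Measure (Fin n → ℕ))
    (hexch : ∀ σ : Equiv.Perm (Fin n), μ.map (fun c : Fin n → ℕ => c ∘ σ) = μ)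
    (z o i j : Fin n) (hzo : z ≠ o) (hij : i ≠ j) :
    μ {c | c i = c j} = μ {c | c z = c o} := by
  set σ₁ : Equiv.Perm (Fin n) := Equiv.swap z i with hσ₁
  set j' : Fin n := σ₁.symm j with hj'
  have hj'z : j' ≠ o ∨ True := Or.inr trivial
  have hzj' : z ≠ j' := by
    intro h
    apply hij
    have : σ₁ z = j := by rw [h, hj', Equiv.apply_symm_apply]
    rw [hσ₁, Equiv.swap_apply_left] at this
    exact this
  set σ : Equiv.Perm (Fin n) := (Equiv.swap o j').trans σ₁ with hσ
  have hσz : σ z = i := by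
    rw [hσ, Equiv.trans_apply, Equiv.swap_apply_of_ne_of_ne hzo hzj', hσ₁,
      Equiv.swap_apply_left]
  have hσo : σ o = j := by
    rw [hσ, Equiv.trans_apply, Equiv.swap_apply_left, hj', Equiv.apply_symm_apply]
  have hmeas : Measurable (fun c : Fin n → ℕ => c ∘ σ) :=
    measurable_pi_lambda _ (fun a => measurable_pi_apply (σ a))
  have hpre : (fun c : Fin n → ℕ => c ∘ σ) ⁻¹' {c | c z = c o} = {c | c i = c j} := by
    ext c
    simp only [Set.mem_preimage, Set.mem_setOf_eq, Function.comp_apply, hσz, hσo]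
  calc μ {c | c i = c j} = μ ((fun c : Fin n → ℕ => c ∘ σ) ⁻¹' {c | c z = c o}) := by
        rw [hpre]
    _ = (μ.map (fun c : Fin n → ℕ => c ∘ σ)) {c | c z = c o} :=
        (Measure.map_apply hmeas (meas_eq_set n z o)).symm
    _ = μ {c | c z = c o} := by rw [hexch σ]

private lemma exch_measure_ne {n : ℕ} (μ : Measure (Fin n → ℕ)) [IsProbabilityMeasure μ]
    (hexch : ∀ σ : Equiv.Perm (Fin n), μ.map (fun c : Fin n → ℕ => c ∘ σ) = μ)
    (z o i j : Fin n) (hzo : z ≠ o) (hij : i ≠ j) :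
    μ {c | c i ≠ c j} = μ {c | c z ≠ c o} := by
  have h1 : {c : Fin n → ℕ | c i ≠ c j} = {c : Fin n → ℕ | c i = c j}ᶜ := rfl
  have h2 : {c : Fin n → ℕ | c z ≠ c o} = {c : Fin n → ℕ | c z = c o}ᶜ := rfl
  rw [h1, h2, measure_compl (meas_eq_set n i j) (measure_ne_top μ _),
    measure_compl (meas_eq_set n z o) (measure_ne_top μ _),
    exch_measure μ hexch z o i j hzo hij]

private lemma integral_prod_ind {α β : Type*} [MeasurableSpace α] [MeasurableSpace β]
    (μ : Measure α) (ν : Measure β) [IsProbabilityMeasure μ] [IsProbabilityMeasure ν]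
    {s : Set α} {t : Set β} (hs : MeasurableSet s) (ht : MeasurableSet t)
    (P : α × β → Prop) [DecidablePred P] (hP : ∀ p, P p ↔ p.1 ∈ s ∧ p.2 ∈ t) :
    Integrable (fun p : α × β => if P p then (1:ℝ) else 0) (μ.prod ν) ∧
    ∫ p, (if P p then (1:ℝ) else 0) ∂(μ.prod ν) = (μ s).toReal * (ν t).toReal := by
  have heq : (fun p : α × β => if P p then (1:ℝ) else 0)
      = (s ×ˢ t).indicator (fun _ => (1:ℝ)) := by
    funext p
    by_cases h : P p
    · simp [Set.indicator_apply, Set.mem_prod, h, (hP p).1 h]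
    · have : ¬ (p.1 ∈ s ∧ p.2 ∈ t) := fun hc => h ((hP p).2 hc)
      simp [Set.indicator_apply, Set.mem_prod, h, this]
  constructor
  · rw [heq]
    exact (integrable_const (1:ℝ)).indicator (hs.prod ht)
  · rw [heq, integral_indicator_const _ (hs.prod ht), measureReal_def, Measure.prod_prod, smul_eq_mul, mul_one,
      ENNReal.toReal_mul]

private lemma pair_integral {n : ℕ} (μ₁ μ₂ : Measure (Fin n → ℕ))
    [IsProbabilityMeasure μ₁] [IsProbabilityMeasure μ₂] (i j : Fin n) :
    Integrable (fun p : (Fin n → ℕ) × (Fin n → ℕ) =>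
      (if p.1 i = p.1 j ∧ p.2 i = p.2 j then (1:ℝ) else 0) +
      (if p.1 i ≠ p.1 j ∧ p.2 i ≠ p.2 j then (1:ℝ) else 0)) (μ₁.prod μ₂) ∧
    ∫ p, ((if p.1 i = p.1 j ∧ p.2 i = p.2 j then (1:ℝ) else 0) +
      (if p.1 i ≠ p.1 j ∧ p.2 i ≠ p.2 j then (1:ℝ) else 0)) ∂(μ₁.prod μ₂) =
      (μ₁ {c | c i = c j}).toReal * (μ₂ {c | c i = c j}).toReal +
      (μ₁ {c | c i ≠ c j}).toReal * (μ₂ {c | c i ≠ c j}).toReal := by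
  have h1 := integral_prod_ind μ₁ μ₂ (meas_eq_set n i j) (meas_eq_set n i j)
    (fun p => p.1 i = p.1 j ∧ p.2 i = p.2 j) (fun p => Iff.rfl)
  have h2 := integral_prod_ind μ₁ μ₂ (meas_ne_set n i j) (meas_ne_set n i j)
    (fun p => p.1 i ≠ p.1 j ∧ p.2 i ≠ p.2 j) (fun p => Iff.rfl)
  refine ⟨h1.1.add h2.1, ?_⟩
  rw [integral_add h1.1 h2.1, h1.2, h2.2]

/-- Expected Rand index of two independent exchangeable random partitions:
`ER^⊥ = ℙ(K₁₂ = 1)ℙ(K₂₂ = 1) + ℙ(K₁₂ = 2)ℙ(K₂₂ = 2)`. -/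
theorem stmt_12 (n : ℕ) (hn : 2 ≤ n)
    (μ₁ μ₂ : Measure (Fin n → ℕ)) [IsProbabilityMeasure μ₁] [IsProbabilityMeasure μ₂]
    (hexch₁ : ∀ σ : Equiv.Perm (Fin n),
      μ₁.map (fun c : Fin n → ℕ => c ∘ σ) = μ₁)
    (hexch₂ : ∀ σ : Equiv.Perm (Fin n),
      μ₂.map (fun c : Fin n → ℕ => c ∘ σ) = μ₂) :
    ∫ p, ((n.choose 2 : ℝ)⁻¹ *
        ∑ q ∈ Finset.univ.filter (fun q : Fin n × Fin n => q.1 < q.2),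
          ((if p.1 q.1 = p.1 q.2 ∧ p.2 q.1 = p.2 q.2 then (1 : ℝ) else 0) +
            (if p.1 q.1 ≠ p.1 q.2 ∧ p.2 q.1 ≠ p.2 q.2 then (1 : ℝ) else 0)))
        ∂(μ₁.prod μ₂) =
      (μ₁ {c | c ⟨0, by omega⟩ = c ⟨1, by omega⟩}).toReal *
          (μ₂ {c | c ⟨0, by omega⟩ = c ⟨1, by omega⟩}).toReal +
        (μ₁ {c | c ⟨0, by omega⟩ ≠ c ⟨1, by omega⟩}).toReal *
          (μ₂ {c | c ⟨0, by omega⟩ ≠ c ⟨1, by omega⟩}).toReal := by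
  set z : Fin n := ⟨0, by omega⟩ with hz
  set o : Fin n := ⟨1, by omega⟩ with ho
  have hzo : z ≠ o := by simp [hz, ho, Fin.ext_iff]
  set E : ℝ := (μ₁ {c | c z = c o}).toReal * (μ₂ {c | c z = c o}).toReal +
      (μ₁ {c | c z ≠ c o}).toReal * (μ₂ {c | c z ≠ c o}).toReal with hE
  rw [integral_const_mul,
    integral_finset_sum _ (fun q _ => (pair_integral μ₁ μ₂ q.1 q.2).1)]
  have hsum : ∑ q ∈ Finset.univ.filter (fun q : Fin n × Fin n => q.1 < q.2),
      (∫ p, ((if p.1 q.1 = p.1 q.2 ∧ p.2 q.1 = p.2 q.2 then (1 : ℝ) else 0) +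
        (if p.1 q.1 ≠ p.1 q.2 ∧ p.2 q.1 ≠ p.2 q.2 then (1 : ℝ) else 0)) ∂(μ₁.prod μ₂))
      = (n.choose 2 : ℝ) * E := by
    rw [Finset.sum_congr rfl (fun q hq => ?_), Finset.sum_const, card_pairs,
      nsmul_eq_mul]
    have hq' : q.1 ≠ q.2 := ne_of_lt (Finset.mem_filter.mp hq).2
    rw [(pair_integral μ₁ μ₂ q.1 q.2).2, hE,
      exch_measure μ₁ hexch₁ z o q.1 q.2 hzo hq',
      exch_measure μ₂ hexch₂ z o q.1 q.2 hzo hq',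
      exch_measure_ne μ₁ hexch₁ z o q.1 q.2 hzo hq',
      exch_measure_ne μ₂ hexch₂ z o q.1 q.2 hzo hq']
  rw [hsum, ← mul_assoc, inv_mul_cancel₀ (by
    have := Nat.choose_pos (k := 2) hn
    positivity), one_mul]
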